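/- arXiv:2305.05596 — 4 statements merged into one kernel-verified Lean document; each statement's English description precedes it below -/
import Mathlib

section
/- Let (A_1,...,A_ℓ) be an (n,k,ℓ)-generic collection with Σᵢ|A_i| = (ℓ-1)k, and suppose A_1,...,A_{ℓ-x} all have size exactly k for some 2 ≤ x ≤ ℓ. Then the remaining sets (A_{ℓ-x+1},...,A_ℓ) form an (n,k,x)-generic collection with Σ_{i=ℓ-x+1}^{ℓ}|A_i| = (x-1)k. -/
open Finset


/-- An `(n,k,ℓ)`-generic collection: subsets of `[n]` of size at most `k` such that
for every partition of `[ℓ]` into parts `P₁,…,Pₛ`, `∑ᵢ |⋂_{j∈Pᵢ} Aⱼ| ≤ (s-1)k`. -/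
def IsGenericCollection (n k : ℕ) {ℓ : ℕ} (A : Fin ℓ → Finset (Fin n)) : Prop :=
  (∀ i, (A i).card ≤ k) ∧
  ∀ P : Finpartition (Finset.univ : Finset (Fin ℓ)),
    ∑ q ∈ P.parts, (q.inf A).card ≤ (P.parts.card - 1) * k

/-- The shift embedding `Fin x ↪ Fin ℓ`, `i ↦ ℓ - x + i`. -/
def genEmb (ℓ x : ℕ) (h : x ≤ ℓ) : Fin x ↪ Fin ℓ :=
  ⟨fun i => ⟨ℓ - x + i.val, by have := i.isLt; omega⟩, fun i j hij => by
    simp only [Fin.mk.injEq] at hij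
    exact Fin.ext (by omega)⟩

lemma genS_eq {ℓ x : ℕ} (h : x ≤ ℓ) :
    (univ.filter fun i : Fin ℓ => i.val < ℓ - x)
      = (univ : Finset (Fin (ℓ - x))).map (Fin.castLEEmb (by omega)) := by
  ext a
  simp only [mem_filter, mem_univ, true_and, mem_map, Fin.castLEEmb, Fin.castLE,
    Function.Embedding.coeFn_mk]
  constructor
  · intro ha
    exact ⟨⟨a.val, ha⟩, rfl⟩
  · rintro ⟨b, rfl⟩
    exact b.isLt

lemma genS_card {ℓ x : ℕ} (h : x ≤ ℓ) :
    (univ.filter fun i : Fin ℓ => i.val < ℓ - x).card = ℓ - x := by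
  rw [genS_eq h, card_map, card_univ, Fintype.card_fin]

lemma genS_compl {ℓ x : ℕ} (h : x ≤ ℓ) :
    (univ.filter fun i : Fin ℓ => ¬ i.val < ℓ - x)
      = (univ : Finset (Fin x)).map (genEmb ℓ x h) := by
  ext a
  simp only [mem_filter, mem_univ, true_and, mem_map, genEmb,
    Function.Embedding.coeFn_mk, not_lt]
  constructor
  · intro ha
    refine ⟨⟨a.val - (ℓ - x), by have := a.isLt; omega⟩, ?_⟩
    exact Fin.ext (show ℓ - x + (a.val - (ℓ - x)) = a.val by omega)
  · rintro ⟨b, rfl⟩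
    exact Nat.le_add_right (ℓ - x) b.val

lemma extend_partition {ℓ x n : ℕ} (hx : x ≤ ℓ)
    (A : Fin ℓ → Finset (Fin n))
    (Q : Finpartition (univ : Finset (Fin x))) :
    ∃ P : Finpartition (univ : Finset (Fin ℓ)),
      P.parts.card = Q.parts.card + (ℓ - x) ∧
      ∑ q ∈ P.parts, (q.inf A).card
        = ∑ q ∈ Q.parts, (q.inf (fun i => A ((genEmb ℓ x hx) i))).card
          + ∑ i ∈ (univ.filter fun i : Fin ℓ => i.val < ℓ - x), (A i).card := by
  classical
  set e := genEmb ℓ x hx with he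
  set S : Finset (Fin ℓ) := univ.filter fun i => i.val < ℓ - x with hS
  have hmapval : ∀ p ∈ Q.parts, ∀ j ∈ p.map e, ℓ - x ≤ j.val := by
    rintro p hp j hj
    rw [mem_map] at hj
    obtain ⟨i, _, rfl⟩ := hj
    exact Nat.le_add_right (ℓ - x) i.val
  have hSval : ∀ i ∈ S, i.val < ℓ - x := by
    intro i hi; rw [hS, mem_filter] at hi; exact hi.2
  -- the two families of parts are disjoint
  have hdisj : Disjoint (Q.parts.image (fun p => p.map e))
      (S.image fun i => ({i} : Finset (Fin ℓ))) := by
    rw [disjoint_left]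
    rintro a ha hb
    rw [mem_image] at ha hb
    obtain ⟨p, hp, rfl⟩ := ha
    obtain ⟨i, hiS, hpi⟩ := hb
    obtain ⟨j, hj⟩ := (Q.nonempty_of_mem_parts hp).map (f := e)
    have h1 := hmapval p hp j hj
    rw [← hpi, mem_singleton] at hj
    subst hj
    exact absurd (hSval _ hiS) (by omega)
  set parts := Q.parts.image (fun p => p.map e) ∪ S.image (fun i => ({i} : Finset (Fin ℓ)))
    with hparts
  -- build the partition
  have hsupIndep : parts.SupIndep id := by
    rw [supIndep_iff_pairwiseDisjoint]
    intro a ha b hb hab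
    simp only [hparts, coe_union, Set.mem_union, coe_image, Set.mem_image, mem_coe] at ha hb
    rcases ha with ⟨p, hp, rfl⟩ | ⟨i, hi, rfl⟩ <;> rcases hb with ⟨q, hq, rfl⟩ | ⟨j, hj, rfl⟩
    · have hpq : p ≠ q := fun h => hab (by rw [h])
      have := Q.disjoint hp hq hpq
      simp only [Function.onFun, id_eq] at this ⊢
      rw [disjoint_left] at this ⊢
      intro a ha hb
      rw [mem_map] at ha hb
      obtain ⟨u, hu, rfl⟩ := ha
      obtain ⟨v, hv, hveq⟩ := hb
      exact this hu (by rwa [e.injective hveq] at hv)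
    · show Disjoint (p.map e) ({j} : Finset (Fin ℓ))
      rw [disjoint_left]
      intro a ha hb
      rw [mem_singleton] at hb
      exact absurd (hmapval p hp a ha) (by have h1 := hSval j hj; have h2 : (a : ℕ) = j.val := congrArg Fin.val hb; omega)
    · show Disjoint ({i} : Finset (Fin ℓ)) (q.map e)
      rw [disjoint_left]
      intro a ha hb
      rw [mem_singleton] at ha
      exact absurd (hmapval q hq a hb) (by have h1 := hSval i hi; have h2 : (a : ℕ) = i.val := congrArg Fin.val ha; omega)
    · have hij : i ≠ j := fun h => hab (by rw [h])
      show Disjoint ({i} : Finset (Fin ℓ)) ({j} : Finset (Fin ℓ))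
      simpa using hij
  have hsup : parts.sup id = univ := by
    apply eq_univ_of_forall
    intro j
    rw [Finset.mem_sup]
    by_cases hj : j.val < ℓ - x
    · exact ⟨{j}, mem_union_right _ (mem_image_of_mem _ (by simp [hS, hj])), by simp⟩
    · have hjx : j.val - (ℓ - x) < x := by have := j.isLt; omega
      set i : Fin x := ⟨j.val - (ℓ - x), hjx⟩ with hi
      have hij : e i = j := Fin.ext (show ℓ - x + (j.val - (ℓ - x)) = j.val by omega)
      have : i ∈ Q.parts.sup id := by rw [Q.sup_parts]; exact mem_univ i
      rw [Finset.mem_sup] at this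
      obtain ⟨p, hp, hip⟩ := this
      exact ⟨p.map e, mem_union_left _ (mem_image_of_mem _ hp),
        by rw [id, mem_map]; exact ⟨i, hip, hij⟩⟩
  have hbot : ⊥ ∉ parts := by
    rw [hparts, mem_union]
    rintro (h | h) <;> rw [mem_image] at h
    · obtain ⟨p, hp, hpe⟩ := h
      have := (Q.nonempty_of_mem_parts hp).map (f := e)
      rw [hpe] at this
      exact absurd this (by simp)
    · obtain ⟨i, _, hie⟩ := h
      have : (i : Fin ℓ) ∈ (⊥ : Finset (Fin ℓ)) := by rw [← hie]; exact mem_singleton_self i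
      simp at this
  refine ⟨⟨parts, hsupIndep, hsup, hbot⟩, ?_, ?_⟩
  · show parts.card = _
    rw [hparts, card_union_of_disjoint hdisj,
      card_image_of_injective _ (Finset.map_injective e),
      card_image_of_injective _ Finset.singleton_injective, hS, genS_card hx]
  · show ∑ q ∈ parts, (q.inf A).card = _
    rw [hparts, sum_union hdisj,
      sum_image (fun a ha b hb h => Finset.map_injective e h),
      sum_image (fun a ha b hb h => Finset.singleton_injective h)]
    congr 1
    · apply sum_congr rfl
      intro p hp
      rw [Finset.inf_map]
      rfl
    · apply sum_congr rfl
      intro i hi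
      rw [Finset.inf_singleton]

theorem stmt2 {n k ℓ x : ℕ} (hk : 1 ≤ k) (hn : k ≤ n) (hx2 : 2 ≤ x) (hxℓ : x ≤ ℓ)
    (A : Fin ℓ → Finset (Fin n)) (hgen : IsGenericCollection n k A)
    (hsum : ∑ i, (A i).card = (ℓ - 1) * k)
    (hfirst : ∀ i : Fin ℓ, i.val < ℓ - x → (A i).card = k) :
    IsGenericCollection n k
      (fun i : Fin x => A ⟨ℓ - x + i.val, by have := i.isLt; omega⟩) ∧
    ∑ i : Fin x, (A ⟨ℓ - x + i.val, by have := i.isLt; omega⟩).card = (x - 1) * k := by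
  classical
  set e := genEmb ℓ x hxℓ with he
  set S : Finset (Fin ℓ) := univ.filter fun i => i.val < ℓ - x with hS
  have hsumS : ∑ i ∈ S, (A i).card = (ℓ - x) * k := by
    have hall : ∀ i ∈ S, (A i).card = k := fun i hi =>
      hfirst i (by rw [hS, mem_filter] at hi; exact hi.2)
    calc ∑ i ∈ S, (A i).card = ∑ _i ∈ S, k := sum_congr rfl hall
      _ = S.card * k := by rw [sum_const, smul_eq_mul]
      _ = (ℓ - x) * k := by rw [hS, genS_card hxℓ]
  have hsumRest : ∑ i : Fin x, (A (e i)).card = (x - 1) * k := by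
    have hsplit := Finset.sum_filter_add_sum_filter_not univ
      (fun i : Fin ℓ => i.val < ℓ - x) (fun i => (A i).card)
    rw [genS_compl hxℓ, Finset.sum_map] at hsplit
    have : (ℓ - 1) * k = (ℓ - x) * k + (x - 1) * k := by
      rw [← Nat.add_mul]; congr 1; omega
    rw [hsum, this, ← hS, hsumS] at hsplit
    exact Nat.add_left_cancel hsplit
  have hEdef : (fun i : Fin x => A ⟨ℓ - x + i.val, by have := i.isLt; omega⟩)
      = fun i => A (e i) := rfl
  constructor
  · refine ⟨fun i => hgen.1 _, ?_⟩
    intro Q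
    obtain ⟨P, hcard, hsumP⟩ := extend_partition hxℓ A Q
    have hbound := hgen.2 P
    rw [hsumP, hcard, ← hS, hsumS] at hbound
    have hnex : Nonempty (Fin x) := ⟨⟨0, by omega⟩⟩
    have hQ1 : 1 ≤ Q.parts.card :=
      Finset.card_pos.mpr (Q.parts_nonempty
        (by simpa using (Finset.univ_nonempty (α := Fin x)).ne_empty))
    have hdist : (Q.parts.card + (ℓ - x) - 1) * k
        = (Q.parts.card - 1) * k + (ℓ - x) * k := by
      rw [← Nat.add_mul]; congr 1; omega
    rw [hdist] at hbound
    exact Nat.le_of_add_le_add_right hbound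
  · exact hsumRest
end

section
/- Let (A'_1,...,A'_{k-1}) be an (n,k-1,k-1)-generic collection of subsets of [n] with Σᵢ|A'_i| = (k-2)(k-1), where n ≥ (k-2)(k-1)+1. Pick p ∈ [n] not in A'_1 ∪ ... ∪ A'_{k-1} (such p exists), set A_i = A'_i ∪ {p} for i ∈ [k-1], and let A_k = A'_x ∪ {e} where A'_x has size k-2 and e is one element of (A'_1 ∪ ... ∪ A'_{k-1}) \ A'_x. Then (A_1,...,A_k) is an (n,k,k)-generic collection with Σᵢ|A_i| = (k-1)k. -/
open Finset

lemma inf_insert_const {α ι : Type*} [DecidableEq α] [Fintype α] {t : Finset ι} (ht : t.Nonempty)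
    (S : ι → Finset α) (p : α) :
    t.inf (fun i => insert p (S i)) = insert p (t.inf S) := by
  induction ht using Finset.Nonempty.cons_induction with
  | singleton i => simp
  | cons i t hi ht ih =>
    rw [Finset.inf_cons, ih, Finset.inf_cons]
    ext a
    simp only [Finset.inf_eq_inter, Finset.mem_inter, Finset.mem_insert]
    tauto

lemma card_add_card_le {α : Type*} [DecidableEq α] {U V W : Finset α} (hU : U ⊆ W) (hV : V ⊆ W) :
    U.card + V.card ≤ W.card + (U ∩ V).card := by
  rw [← Finset.card_union_add_card_inter]
  exact Nat.add_le_add_right (Finset.card_le_card (Finset.union_subset hU hV)) _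

def mkPart {N : ℕ} (parts : Finset (Finset (Fin N)))
    (hdisj : (parts : Set (Finset (Fin N))).PairwiseDisjoint id)
    (hcover : ∀ i, ∃ q ∈ parts, i ∈ q)
    (hne : ∀ q ∈ parts, q.Nonempty) :
    Finpartition (Finset.univ : Finset (Fin N)) where
  parts := parts
  supIndep := Finset.supIndep_iff_pairwiseDisjoint.mpr hdisj
  sup_parts := by
    apply Finset.Subset.antisymm
    · intro a _; exact Finset.mem_univ a
    · intro i _
      obtain ⟨q, hq, hiq⟩ := hcover i
      exact Finset.mem_sup.mpr ⟨q, hq, hiq⟩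
  bot_notMem := fun h => (Finset.not_nonempty_empty (hne _ h)).elim

@[simp] lemma mkPart_parts {N : ℕ} (parts) (h1) (h2) (h3) :
    (mkPart (N := N) parts h1 h2 h3).parts = parts := rfl

set_option maxHeartbeats 1000000 in
theorem stmt6 {n k : ℕ} (hk : 3 ≤ k) (hn : (k - 2) * (k - 1) + 1 ≤ n)
    (A' : Fin (k - 1) → Finset (Fin n))
    (hgen : IsGenericCollection n (k - 1) A')
    (hsum : ∑ i, (A' i).card = (k - 2) * (k - 1))
    (p : Fin n) (hp : ∀ i, p ∉ A' i)
    (x : Fin (k - 1)) (hx : (A' x).card = k - 2)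
    (e : Fin n) (he : e ∈ Finset.univ.biUnion A' \ A' x)
    (A : Fin k → Finset (Fin n))
    (hA : ∀ i : Fin k, (h : i.val < k - 1) → A i = insert p (A' ⟨i.val, h⟩))
    (hAk : A ⟨k - 1, by omega⟩ = insert e (A' x)) :
    IsGenericCollection n k A ∧ ∑ i, (A i).card = (k - 1) * k := by
  obtain ⟨m, rfl⟩ : ∃ m, k = m + 3 := ⟨k - 3, by omega⟩
  have hA' : ∀ i : Fin (m + 2), A i.castSucc = insert p (A' i) := by
    intro i
    have h : (i.castSucc : Fin (m + 3)).val < m + 2 := i.isLt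
    rw [hA i.castSucc h]
    have : (⟨(i.castSucc : Fin (m + 3)).val, h⟩ : Fin (m + 3 - 1)) = i := Fin.ext rfl
    rw [this]
  set L : Fin (m + 3) := ⟨m + 2, by omega⟩ with hL
  have hAL : A L = insert e (A' x) := hAk
  have heAx : e ∉ A' x := (Finset.mem_sdiff.mp he).2
  have hpe : p ≠ e := by
    obtain ⟨i, _, hei⟩ := Finset.mem_biUnion.mp (Finset.mem_sdiff.mp he).1
    exact fun h => hp i (h ▸ hei)
  have hpL : p ∉ A L := by
    rw [hAL]; simp only [Finset.mem_insert]
    rintro (h | h); exact hpe h; exact hp x h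
  have hALcard : (A L).card = m + 2 := by
    rw [hAL, Finset.card_insert_of_notMem heAx, hx]; omega
  have hAxL : A' x ⊆ A L := by rw [hAL]; exact Finset.subset_insert _ _
  -- the preimage operation
  set g : Finset (Fin (m + 3)) → Finset (Fin (m + 2)) :=
    fun q => q.preimage Fin.castSucc (fun a _ b _ h => Fin.castSucc_injective _ h) with hg
  have hg_mem : ∀ (q : Finset (Fin (m + 3))) (i : Fin (m + 2)),
      i ∈ g q ↔ i.castSucc ∈ q := by
    intro q i; rw [hg]; exact Finset.mem_preimage
  have hg_map : ∀ q : Finset (Fin (m + 3)), L ∉ q →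
      q = (g q).map ⟨Fin.castSucc, Fin.castSucc_injective _⟩ := by
    intro q hq
    ext j
    simp only [Finset.mem_map, Function.Embedding.coeFn_mk]
    constructor
    · intro hj
      have hjL : j ≠ Fin.last (m + 2) := fun h => hq (by rw [show L = Fin.last (m + 2) from rfl, ← h]; exact hj)
      obtain ⟨i, hi⟩ := Fin.exists_castSucc_eq.mpr hjL
      exact ⟨i, (hg_mem q i).mpr (hi ▸ hj), hi⟩
    · rintro ⟨i, hi, rfl⟩; exact (hg_mem q i).mp hi
  have hg_card : ∀ q : Finset (Fin (m + 3)), L ∉ q → (g q).card = q.card := by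
    intro q hq
    conv_rhs => rw [hg_map q hq]
    rw [Finset.card_map]
  have hg_ne : ∀ q : Finset (Fin (m + 3)), L ∉ q → q.Nonempty → (g q).Nonempty := by
    intro q hq hqne
    rw [← Finset.card_pos, hg_card q hq, Finset.card_pos]; exact hqne
  have hg_inj : ∀ q₁ q₂ : Finset (Fin (m + 3)), L ∉ q₁ → L ∉ q₂ → g q₁ = g q₂ → q₁ = q₂ := by
    intro q₁ q₂ h1 h2 h
    rw [hg_map q₁ h1, hg_map q₂ h2, h]
  have hg_disj : ∀ q₁ q₂ : Finset (Fin (m + 3)), Disjoint q₁ q₂ → Disjoint (g q₁) (g q₂) := by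
    intro q₁ q₂ h
    rw [Finset.disjoint_left] at h ⊢
    intro i hi1 hi2
    exact h ((hg_mem q₁ i).mp hi1) ((hg_mem q₂ i).mp hi2)
  -- the key inf computations
  have hinf : ∀ q : Finset (Fin (m + 3)), q.Nonempty → L ∉ q →
      q.inf A = insert p ((g q).inf A') := by
    intro q hqne hqL
    conv_lhs => rw [hg_map q hqL]
    rw [Finset.inf_map]
    have : (A ∘ (⟨Fin.castSucc, Fin.castSucc_injective _⟩ : Fin (m + 2) ↪ Fin (m + 3)))
        = fun i => insert p (A' i) := funext fun i => hA' i
    rw [this]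
    exact inf_insert_const (hg_ne q hqL hqne) A' p
  have hpinf : ∀ t : Finset (Fin (m + 2)), t.Nonempty → p ∉ t.inf A' := by
    intro t ⟨j, hj⟩ hmem
    exact hp j (Finset.le_iff_subset.mp (Finset.inf_le hj) hmem)
  have hinfcard : ∀ q : Finset (Fin (m + 3)), q.Nonempty → L ∉ q →
      (q.inf A).card = ((g q).inf A').card + 1 := by
    intro q hqne hqL
    rw [hinf q hqne hqL, Finset.card_insert_of_notMem (hpinf _ (hg_ne q hqL hqne))]
  have hgen1 : ∀ i : Fin (m + 2), (A' i).card ≤ m + 2 := hgen.1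
  have hgen2 : ∀ P : Finpartition (Finset.univ : Finset (Fin (m + 2))),
      ∑ q ∈ P.parts, (q.inf A').card ≤ (P.parts.card - 1) * (m + 2) := hgen.2
  have hx' : (A' x).card = m + 1 := by rw [hx]; omega
  have hcastne : ∀ i : Fin (m + 2), (i.castSucc : Fin (m + 3)) ≠ L := by
    intro i h
    have h2 := congrArg Fin.val h
    have h3 := i.isLt
    simp only [Fin.coe_castSucc, hL] at h2
    omega
  refine ⟨⟨?_, ?_⟩, ?_⟩
  · -- card bound
    intro i
    by_cases h : i.val < m + 2
    · rw [hA i h]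
      have h1 := hgen1 ⟨i.val, h⟩
      have h2 := Finset.card_insert_le p (A' ⟨i.val, h⟩)
      omega
    · have hi : i = L := Fin.ext (by have := i.isLt; simp only [hL]; omega)
      rw [hi]
      omega
  · -- partitions
    intro P
    have hLuniv : L ∈ P.parts.sup id := by rw [P.sup_parts]; exact Finset.mem_univ L
    obtain ⟨Q, hQ, hLQ'⟩ := Finset.mem_sup.mp hLuniv
    have hLQ : L ∈ Q := hLQ'
    have hdisjP : (↑P.parts : Set (Finset (Fin (m + 3)))).PairwiseDisjoint id := P.disjoint
    have hLnot : ∀ q ∈ P.parts.erase Q, L ∉ q := by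
      intro q hq hLq
      have hqP := Finset.mem_of_mem_erase hq
      have hne := Finset.ne_of_mem_erase hq
      exact (Finset.disjoint_left.mp (hdisjP hqP hQ hne) hLq) hLQ
    have hqne : ∀ q ∈ P.parts, q.Nonempty := fun q hq => P.nonempty_of_mem_parts hq
    set T := (P.parts.erase Q).image g with hT
    have hg_injT : ∀ q₁ ∈ P.parts.erase Q, ∀ q₂ ∈ P.parts.erase Q, g q₁ = g q₂ → q₁ = q₂ :=
      fun q₁ h1 q₂ h2 h => hg_inj _ _ (hLnot _ h1) (hLnot _ h2) h
    have hTcard : T.card = P.parts.card - 1 := by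
      rw [hT, Finset.card_image_of_injOn hg_injT, Finset.card_erase_of_mem hQ]
    have hsum_erase : ∑ q ∈ P.parts.erase Q, (q.inf A).card
        = (∑ q' ∈ T, (q'.inf A').card) + (P.parts.card - 1) := by
      rw [hT, Finset.sum_image hg_injT,
        Finset.sum_congr rfl
          (fun q hq => hinfcard q (hqne q (Finset.mem_of_mem_erase hq)) (hLnot q hq)),
        Finset.sum_add_distrib, Finset.sum_const, smul_eq_mul, mul_one,
        Finset.card_erase_of_mem hQ]
    have hsplit : ∑ q ∈ P.parts, (q.inf A).card
        = (Q.inf A).card + ∑ q ∈ P.parts.erase Q, (q.inf A).card :=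
      (Finset.add_sum_erase _ _ hQ).symm
    have hs1 : 1 ≤ P.parts.card := Finset.card_pos.mpr ⟨Q, hQ⟩
    have hTdisj : ∀ q ∈ P.parts.erase Q, ∀ r ∈ P.parts.erase Q, g q ≠ g r →
        Disjoint (g q) (g r) := by
      intro q hq r hr hne
      refine hg_disj _ _ (hdisjP (Finset.mem_of_mem_erase hq) (Finset.mem_of_mem_erase hr) ?_)
      intro h; exact hne (h ▸ rfl)
    have hneT : ∀ q ∈ T, q.Nonempty := by
      intro q hq
      obtain ⟨r, hr, rfl⟩ := Finset.mem_image.mp hq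
      exact hg_ne r (hLnot r hr) (hqne r (Finset.mem_of_mem_erase hr))
    have hcov : ∀ i : Fin (m + 2), ∃ q ∈ P.parts, i.castSucc ∈ q := by
      intro i
      have : (i.castSucc : Fin (m + 3)) ∈ P.parts.sup id := by
        rw [P.sup_parts]; exact Finset.mem_univ _
      exact Finset.mem_sup.mp this
    rcases Finset.eq_empty_or_nonempty (g Q) with hQ0 | hQne
    · -- Case A : Q = {L}
      have hQL : Q = {L} := by
        apply Finset.eq_singleton_iff_unique_mem.mpr
        refine ⟨hLQ, fun j hj => ?_⟩
        by_contra hjL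
        have hjl : j ≠ Fin.last (m + 2) := fun h => hjL (by rw [h]; rfl)
        obtain ⟨i, rfl⟩ := Fin.exists_castSucc_eq.mpr hjl
        have : i ∈ g Q := (hg_mem Q i).mpr hj
        simp [hQ0] at this
      have hQinf : (Q.inf A).card = m + 2 := by
        rw [hQL, Finset.inf_singleton]; exact hALcard
      have hdisjT : (↑T : Set (Finset (Fin (m + 2)))).PairwiseDisjoint id := by
        intro a ha b hb hab
        obtain ⟨q, hq, rfl⟩ := Finset.mem_image.mp ha
        obtain ⟨r, hr, rfl⟩ := Finset.mem_image.mp hb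
        exact hTdisj q hq r hr hab
      have hcovT : ∀ i : Fin (m + 2), ∃ q ∈ T, i ∈ q := by
        intro i
        obtain ⟨q, hq', hiq⟩ := hcov i
        have hqQ : q ≠ Q := by
          intro h; subst h; rw [hQL] at hiq
          exact hcastne i (Finset.mem_singleton.mp hiq)
        exact ⟨g q, Finset.mem_image_of_mem g (Finset.mem_erase.mpr ⟨hqQ, hq'⟩),
          (hg_mem q i).mpr hiq⟩
      have hbound := hgen2 (mkPart T hdisjT hcovT hneT)
      rw [mkPart_parts, hTcard] at hbound
      have hs2 : 2 ≤ P.parts.card := by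
        obtain ⟨q0, hq0, _⟩ := hcovT 0
        obtain ⟨r, hr, rfl⟩ := Finset.mem_image.mp hq0
        have h1 := Finset.card_pos.mpr ⟨r, hr⟩
        rw [Finset.card_erase_of_mem hQ] at h1
        omega
      rw [hsplit, hsum_erase, hQinf]
      obtain ⟨t, ht⟩ : ∃ t, P.parts.card = t + 2 := ⟨P.parts.card - 2, by omega⟩
      rw [ht] at hbound ⊢
      have e1 : t + 2 - 1 = t + 1 := by omega
      have e2 : t + 1 - 1 = t := by omega
      rw [e1] at hbound ⊢
      rw [e2] at hbound
      nlinarith [hbound]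
    · -- Case B : g Q nonempty
      have hgQ0 : g (Q.erase L) = g Q := by
        ext i
        rw [hg_mem, hg_mem, Finset.mem_erase]
        exact ⟨fun h => h.2, fun h => ⟨hcastne i, h⟩⟩
      have hQ0ne : (Q.erase L).Nonempty := by
        obtain ⟨i, hi⟩ := hQne
        exact ⟨i.castSucc, Finset.mem_erase.mpr ⟨hcastne i, (hg_mem Q i).mp hi⟩⟩
      have hQinfA : Q.inf A = A L ∩ insert p ((g Q).inf A') := by
        conv_lhs => rw [← Finset.insert_erase hLQ]
        rw [Finset.inf_insert, hinf _ hQ0ne (Finset.notMem_erase _ _), hgQ0]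
        rfl
      by_cases hxQ : x ∈ g Q
      · -- Case B1
        have hY : (g Q).inf A' ⊆ A' x := Finset.le_iff_subset.mp (Finset.inf_le hxQ)
        have hQinf : Q.inf A = (g Q).inf A' := by
          rw [hQinfA]
          apply Finset.Subset.antisymm
          · intro a ha
            obtain ⟨haL, hain⟩ := Finset.mem_inter.mp ha
            rcases Finset.mem_insert.mp hain with rfl | h
            · exact absurd haL hpL
            · exact h
          · intro a ha
            exact Finset.mem_inter.mpr ⟨hAxL (hY ha), Finset.mem_insert_of_mem ha⟩
        have hgQT : g Q ∉ T := by
          intro h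
          obtain ⟨r, hr, hgr⟩ := Finset.mem_image.mp h
          have hd := hg_disj r Q
            (hdisjP (Finset.mem_of_mem_erase hr) hQ (Finset.ne_of_mem_erase hr))
          rw [hgr] at hd
          exact hQne.ne_empty (disjoint_self.mp hd)
        have hdisj1 : (↑(insert (g Q) T) : Set (Finset (Fin (m + 2)))).PairwiseDisjoint id := by
          intro a ha b hb hab
          simp only [Finset.coe_insert, Set.mem_insert_iff, Finset.mem_coe] at ha hb
          have hQd : ∀ r ∈ P.parts.erase Q, Disjoint (g Q) (g r) := by
            intro r hr
            exact hg_disj Q r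
              (hdisjP hQ (Finset.mem_of_mem_erase hr) (Finset.ne_of_mem_erase hr).symm)
          rcases ha with rfl | ha <;> rcases hb with rfl | hb
          · exact absurd rfl hab
          · obtain ⟨r, hr, rfl⟩ := Finset.mem_image.mp hb; exact hQd r hr
          · obtain ⟨r, hr, rfl⟩ := Finset.mem_image.mp ha; exact (hQd r hr).symm
          · obtain ⟨q1, h1, rfl⟩ := Finset.mem_image.mp ha
            obtain ⟨q2, h2, rfl⟩ := Finset.mem_image.mp hb
            exact hTdisj q1 h1 q2 h2 hab
        have hcov1 : ∀ i : Fin (m + 2), ∃ q ∈ insert (g Q) T, i ∈ q := by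
          intro i
          obtain ⟨q, hq', hiq⟩ := hcov i
          by_cases hqQ : q = Q
          · subst hqQ
            exact ⟨g q, Finset.mem_insert_self _ _, (hg_mem q i).mpr hiq⟩
          · exact ⟨g q, Finset.mem_insert_of_mem
              (Finset.mem_image_of_mem g (Finset.mem_erase.mpr ⟨hqQ, hq'⟩)),
              (hg_mem q i).mpr hiq⟩
        have hne1 : ∀ q ∈ insert (g Q) T, q.Nonempty := by
          intro q hq
          rcases Finset.mem_insert.mp hq with rfl | h
          · exact hQne
          · exact hneT q h
        have hbound := hgen2 (mkPart (insert (g Q) T) hdisj1 hcov1 hne1)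
        rw [mkPart_parts, Finset.sum_insert hgQT,
          Finset.card_insert_of_notMem hgQT, hTcard] at hbound
        rw [hsplit, hsum_erase, hQinf]
        obtain ⟨t, ht⟩ : ∃ t, P.parts.card = t + 1 := ⟨P.parts.card - 1, by omega⟩
        rw [ht] at hbound ⊢
        have e1 : t + 1 - 1 = t := by omega
        rw [e1] at hbound ⊢
        have e2 : t + 1 - 1 = t := by omega
        rw [e2] at hbound
        nlinarith [hbound]
      · -- Case B2
        obtain ⟨R, hR, hxR⟩ := hcov x
        have hRQ : R ≠ Q := fun h => hxQ ((hg_mem Q x).mpr (h ▸ hxR))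
        have hRE : R ∈ P.parts.erase Q := Finset.mem_erase.mpr ⟨hRQ, hR⟩
        have hLR : L ∉ R := hLnot R hRE
        have hxgR : x ∈ g R := (hg_mem R x).mpr hxR
        set E := g Q ∪ g R with hE
        set T2 := ((P.parts.erase Q).erase R).image g with hT2
        have hsub2 : ∀ r ∈ (P.parts.erase Q).erase R, r ∈ P.parts.erase Q :=
          fun r hr => Finset.mem_of_mem_erase hr
        have hET2 : E ∉ T2 := by
          intro h
          obtain ⟨r, hr, hgr⟩ := Finset.mem_image.mp h
          have hrP := Finset.mem_of_mem_erase (hsub2 r hr)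
          have hd := hg_disj r R (hdisjP hrP hR (Finset.ne_of_mem_erase hr))
          have hxr : x ∈ g r := by rw [hgr, hE]; exact Finset.mem_union_right _ hxgR
          exact Finset.disjoint_left.mp hd hxr hxgR
        have hEd : ∀ r ∈ (P.parts.erase Q).erase R, Disjoint E (g r) := by
          intro r hr
          have hrP := Finset.mem_of_mem_erase (hsub2 r hr)
          have hQr : Q ≠ r := (Finset.ne_of_mem_erase (hsub2 r hr)).symm
          have hRr : R ≠ r := (Finset.ne_of_mem_erase hr).symm
          rw [hE]
          exact Finset.disjoint_union_left.mpr
            ⟨hg_disj Q r (hdisjP hQ hrP hQr), hg_disj R r (hdisjP hR hrP hRr)⟩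
        have hdisj2 : (↑(insert E T2) : Set (Finset (Fin (m + 2)))).PairwiseDisjoint id := by
          intro a ha b hb hab
          simp only [Finset.coe_insert, Set.mem_insert_iff, Finset.mem_coe] at ha hb
          rcases ha with rfl | ha <;> rcases hb with rfl | hb
          · exact absurd rfl hab
          · obtain ⟨r, hr, rfl⟩ := Finset.mem_image.mp hb; exact hEd r hr
          · obtain ⟨r, hr, rfl⟩ := Finset.mem_image.mp ha; exact (hEd r hr).symm
          · obtain ⟨q1, h1, rfl⟩ := Finset.mem_image.mp ha
            obtain ⟨q2, h2, rfl⟩ := Finset.mem_image.mp hb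
            exact hTdisj q1 (hsub2 q1 h1) q2 (hsub2 q2 h2) hab
        have hcov2 : ∀ i : Fin (m + 2), ∃ q ∈ insert E T2, i ∈ q := by
          intro i
          obtain ⟨q, hq', hiq⟩ := hcov i
          by_cases hqQ : q = Q
          · subst hqQ
            exact ⟨E, Finset.mem_insert_self _ _,
              Finset.mem_union_left _ ((hg_mem q i).mpr hiq)⟩
          by_cases hqR : q = R
          · subst hqR
            exact ⟨E, Finset.mem_insert_self _ _,
              Finset.mem_union_right _ ((hg_mem q i).mpr hiq)⟩
          · exact ⟨g q, Finset.mem_insert_of_mem (Finset.mem_image_of_mem g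
              (Finset.mem_erase.mpr ⟨hqR, Finset.mem_erase.mpr ⟨hqQ, hq'⟩⟩)),
              (hg_mem q i).mpr hiq⟩
        have hne2 : ∀ q ∈ insert E T2, q.Nonempty := by
          intro q hq
          rcases Finset.mem_insert.mp hq with rfl | h
          · obtain ⟨i, hi⟩ := hQne; exact ⟨i, Finset.mem_union_left _ hi⟩
          · obtain ⟨r, hr, rfl⟩ := Finset.mem_image.mp h
            exact hg_ne r (hLnot r (hsub2 r hr)) (hqne r (Finset.mem_of_mem_erase (hsub2 r hr)))
        have hT2card : T2.card = P.parts.card - 2 := by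
          rw [hT2, Finset.card_image_of_injOn
            (fun q1 h1 q2 h2 h => hg_injT q1 (hsub2 q1 h1) q2 (hsub2 q2 h2) h),
            Finset.card_erase_of_mem hRE, Finset.card_erase_of_mem hQ]
          omega
        have hbound := hgen2 (mkPart (insert E T2) hdisj2 hcov2 hne2)
        rw [mkPart_parts, Finset.sum_insert hET2,
          Finset.card_insert_of_notMem hET2, hT2card] at hbound
        -- split sums
        have hsplit2 : ∑ q ∈ P.parts.erase Q, (q.inf A).card
            = (R.inf A).card + ∑ q ∈ (P.parts.erase Q).erase R, (q.inf A).card :=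
          (Finset.add_sum_erase _ _ hRE).symm
        have hs2 : 2 ≤ P.parts.card := by
          have h1 := Finset.card_pos.mpr ⟨R, hRE⟩
          rw [Finset.card_erase_of_mem hQ] at h1
          omega
        have hsum_erase2 : ∑ q ∈ (P.parts.erase Q).erase R, (q.inf A).card
            = (∑ q' ∈ T2, (q'.inf A').card) + (P.parts.card - 2) := by
          rw [hT2, Finset.sum_image
              (fun q1 h1 q2 h2 h => hg_injT q1 (hsub2 q1 h1) q2 (hsub2 q2 h2) h),
            Finset.sum_congr rfl (fun q hq => hinfcard q
              (hqne q (Finset.mem_of_mem_erase (hsub2 q hq))) (hLnot q (hsub2 q hq))),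
            Finset.sum_add_distrib, Finset.sum_const, smul_eq_mul, mul_one,
            Finset.card_erase_of_mem hRE, Finset.card_erase_of_mem hQ]
          omega
        have hRinf : (R.inf A).card = ((g R).inf A').card + 1 :=
          hinfcard R (hqne R hR) hLR
        have hQinfle : (Q.inf A).card ≤ (A' x ∩ (g Q).inf A').card + 1 := by
          have hsubQ : Q.inf A ⊆ insert e (A' x ∩ (g Q).inf A') := by
            rw [hQinfA]
            intro a ha
            obtain ⟨haL, hain⟩ := Finset.mem_inter.mp ha
            rw [hAL] at haL
            rcases Finset.mem_insert.mp haL with rfl | hax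
            · exact Finset.mem_insert_self _ _
            · rcases Finset.mem_insert.mp hain with rfl | hY
              · exact absurd (hAxL hax) hpL
              · exact Finset.mem_insert_of_mem (Finset.mem_inter.mpr ⟨hax, hY⟩)
          calc (Q.inf A).card ≤ (insert e (A' x ∩ (g Q).inf A')).card :=
                Finset.card_le_card hsubQ
            _ ≤ (A' x ∩ (g Q).inf A').card + 1 := Finset.card_insert_le _ _
        have hkey : (A' x ∩ (g Q).inf A').card + ((g R).inf A').card
            ≤ (m + 1) + (E.inf A').card := by
          have h1 : A' x ∩ (g Q).inf A' ⊆ A' x := Finset.inter_subset_left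
          have h2 : (g R).inf A' ⊆ A' x := Finset.le_iff_subset.mp (Finset.inf_le hxgR)
          have h3 := card_add_card_le h1 h2
          rw [hx'] at h3
          have h4 : (A' x ∩ (g Q).inf A') ∩ (g R).inf A' ⊆ E.inf A' := by
            rw [hE, Finset.inf_union]
            intro a ha
            simp only [Finset.mem_inter] at ha
            exact Finset.mem_inter.mpr ⟨ha.1.2, ha.2⟩
          have h5 := Finset.card_le_card h4
          omega
        rw [hsplit, hsplit2, hsum_erase2, hRinf]
        obtain ⟨t, ht⟩ : ∃ t, P.parts.card = t + 2 := ⟨P.parts.card - 2, by omega⟩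
        rw [ht] at hbound ⊢
        simp only [show t + 2 - 1 = t + 1 from by omega, show t + 2 - 2 = t from by omega,
          show t + 1 - 1 = t from by omega] at hbound ⊢
        nlinarith [hbound, hQinfle, hkey]
  · -- total size
    rw [Fin.sum_univ_castSucc]
    have hterm : ∀ i : Fin (m + 2), (A i.castSucc).card = (A' i).card + 1 := by
      intro i
      rw [hA' i, Finset.card_insert_of_notMem (hp i)]
    rw [Finset.sum_congr rfl (fun i _ => hterm i), Finset.sum_add_distrib,
      Finset.sum_const, smul_eq_mul, mul_one]
    have hsum' : ∑ i : Fin (m + 2), (A' i).card = (m + 1) * (m + 2) := hsum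
    have hlast : (A (Fin.last (m + 2))).card = m + 2 := hALcard
    rw [hlast, hsum']
    have hu : (Finset.univ : Finset (Fin (m + 2))).card = m + 2 := Finset.card_fin (m + 2)
    have e0 : m + 3 - 1 = m + 2 := rfl
    rw [hu, e0]
    ring
end

section
/- Let (A'_1,...,A'_ℓ) be an (n,k,ℓ)-generic collection of subsets of [n] with Σᵢ|A'_i| = (ℓ-1)k, where n ≥ (ℓ-1)k + 1. Pick p ∈ [n] \ (A'_1 ∪ ... ∪ A'_ℓ) (which exists), and define A_i = A'_i ∪ {p} for i ∈ [ℓ-1] and A_ℓ = A'_ℓ. Then (A_1,...,A_ℓ) is an (n,k+1,ℓ)-generic collection with Σᵢ|A_i| = (ℓ-1)(k+1). -/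
theorem stmt8 {n k ℓ : ℕ} (hℓ : 2 ≤ ℓ) (hk : 1 ≤ k) (hn : (ℓ - 1) * k + 1 ≤ n)
    (A' : Fin ℓ → Finset (Fin n)) (hgen : IsGenericCollection n k A')
    (hsum : ∑ i, (A' i).card = (ℓ - 1) * k)
    (p : Fin n) (hp : ∀ i, p ∉ A' i)
    (A : Fin ℓ → Finset (Fin n))
    (hA : ∀ i : Fin ℓ, i.val < ℓ - 1 → A i = insert p (A' i))
    (hAl : ∀ i : Fin ℓ, i.val = ℓ - 1 → A i = A' i) :
    IsGenericCollection n (k + 1) A ∧ ∑ i, (A i).card = (ℓ - 1) * (k + 1) := by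
  have hℓpos : 0 < ℓ := by omega
  set lst : Fin ℓ := ⟨ℓ - 1, by omega⟩ with hlst
  have hAsub : ∀ i, A i ⊆ insert p (A' i) := by
    intro i
    rcases lt_or_eq_of_le (Nat.lt_succ_iff.mp (by omega : i.val < (ℓ - 1) + 1)) with h | h
    · rw [hA i h]
    · rw [hAl i h]; exact Finset.subset_insert _ _
  have hAcard : ∀ i, (A i).card ≤ (A' i).card + 1 := by
    intro i
    calc (A i).card ≤ (insert p (A' i)).card := Finset.card_le_card (hAsub i)
      _ ≤ (A' i).card + 1 := Finset.card_insert_le _ _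
  -- key: inf over a nonempty set
  have hinf : ∀ q : Finset (Fin ℓ), q.Nonempty → q.inf A ⊆ insert p (q.inf A') := by
    intro q hq x hx
    rw [← Finset.inf'_eq_inf hq, Finset.mem_inf' hq] at hx
    by_cases hxp : x = p
    · simp [hxp]
    · refine Finset.mem_insert_of_mem ?_
      rw [← Finset.inf'_eq_inf hq, Finset.mem_inf' hq]
      intro i hi
      have := hAsub i (hx i hi)
      rcases Finset.mem_insert.mp this with h | h
      · exact absurd h hxp
      · exact h
  have hinfcard : ∀ q : Finset (Fin ℓ), q.Nonempty → (q.inf A).card ≤ (q.inf A').card + 1 := by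
    intro q hq
    calc (q.inf A).card ≤ (insert p (q.inf A')).card := Finset.card_le_card (hinf q hq)
      _ ≤ (q.inf A').card + 1 := Finset.card_insert_le _ _
  have hinflst : ∀ q : Finset (Fin ℓ), lst ∈ q → (q.inf A).card ≤ (q.inf A').card := by
    intro q hq
    refine Finset.card_le_card (fun x hx => ?_)
    have hnp : x ≠ p := by
      have hx1 : x ∈ A lst := (Finset.inf_le hq : q.inf A ⊆ A lst) hx
      rw [hAl lst rfl] at hx1
      intro h; exact hp lst (h ▸ hx1)
    have := hinf q ⟨lst, hq⟩ hx
    rcases Finset.mem_insert.mp this with h | h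
    · exact absurd h hnp
    · exact h
  constructor
  · constructor
    · intro i; exact le_trans (hAcard i) (by have := hgen.1 i; omega)
    · intro P
      obtain ⟨q0, hq0, hlq0⟩ := P.exists_mem (Finset.mem_univ lst)
      have hcardpos : 1 ≤ P.parts.card := Finset.card_pos.mpr ⟨q0, hq0⟩
      have hsplit : (q0.inf A).card + ∑ q ∈ P.parts.erase q0, (q.inf A).card
          = ∑ q ∈ P.parts, (q.inf A).card :=
        Finset.add_sum_erase P.parts (fun q => (q.inf A).card) hq0
      have hsplit' : (q0.inf A').card + ∑ q ∈ P.parts.erase q0, (q.inf A').card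
          = ∑ q ∈ P.parts, (q.inf A').card :=
        Finset.add_sum_erase P.parts (fun q => (q.inf A').card) hq0
      have hbound : ∑ q ∈ P.parts.erase q0, (q.inf A).card ≤
          ∑ q ∈ P.parts.erase q0, ((q.inf A').card + 1) := by
        refine Finset.sum_le_sum (fun q hq => ?_)
        exact hinfcard q (P.nonempty_of_mem_parts (Finset.mem_of_mem_erase hq))
      rw [Finset.sum_add_distrib, Finset.sum_const, smul_eq_mul, mul_one,
        Finset.card_erase_of_mem hq0] at hbound
      have hgen2 := hgen.2 P
      have h1 := hinflst q0 hlq0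
      have : ∑ q ∈ P.parts, (q.inf A).card ≤ ∑ q ∈ P.parts, (q.inf A').card
          + (P.parts.card - 1) := by omega
      calc ∑ q ∈ P.parts, (q.inf A).card
          ≤ (P.parts.card - 1) * k + (P.parts.card - 1) := by omega
        _ = (P.parts.card - 1) * (k + 1) := by ring
  · have hcardeq : ∀ i : Fin ℓ, (A i).card = (A' i).card + (if i.val < ℓ - 1 then 1 else 0) := by
      intro i
      by_cases h : i.val < ℓ - 1
      · rw [hA i h, if_pos h, Finset.card_insert_of_notMem (hp i)]
      · rw [hAl i (by omega), if_neg h]; omega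
    calc ∑ i, (A i).card
        = ∑ i, ((A' i).card + if i.val < ℓ - 1 then 1 else 0) := by
          exact Finset.sum_congr rfl (fun i _ => hcardeq i)
      _ = (ℓ - 1) * k + ∑ i : Fin ℓ, (if i.val < ℓ - 1 then 1 else 0) := by
          rw [Finset.sum_add_distrib, hsum]
      _ = (ℓ - 1) * k + (ℓ - 1) := by
          congr 1
          rw [Finset.sum_boole]
          have : (Finset.univ.filter fun i : Fin ℓ => i.val < ℓ - 1) = Finset.Iio lst := by
            ext i; simp [Finset.mem_Iio, Fin.lt_def, hlst]
          rw [this, Fin.card_Iio]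
          simp [hlst]
      _ = (ℓ - 1) * (k + 1) := by ring
end

section
/- Schwartz–Zippel: Let p(x_1,...,x_n) be a nonzero polynomial of total degree d over a field F and let S ⊆ F be finite with |S| ≥ d. If x_1,...,x_n are chosen independently and uniformly at random from S, then the number of tuples (x_1,...,x_n) ∈ S^n with p(x_1,...,x_n) = 0 is at most d·|S|^{n-1}. -/
open MvPolynomial Finset

private lemma sz_key {F : Type*} [Field F] [DecidableEq F] (S : Finset F) :
    ∀ (n : ℕ) (p : MvPolynomial (Fin n) F), p ≠ 0 →
      (((Fintype.piFinset fun _ : Fin n => S).filter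
          fun x => MvPolynomial.eval x p = 0).card) * S.card ≤
        p.totalDegree * S.card ^ n := by
  classical
  intro n
  induction n with
  | zero =>
    intro p hp
    obtain ⟨a, rfl⟩ := MvPolynomial.C_surjective (Fin 0) p
    have ha : a ≠ 0 := fun h => hp (by simp [h])
    have : ((Fintype.piFinset fun _ : Fin 0 => S).filter
        fun x => MvPolynomial.eval x (MvPolynomial.C a) = 0) = ∅ := by
      apply Finset.filter_false_of_mem
      intro x _
      simpa using ha
    rw [this]
    simp only [Finset.card_empty, Nat.zero_mul]
    exact Nat.zero_le _
  | succ n ih =>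
    intro p hp
    set q : Polynomial (MvPolynomial (Fin n) F) := finSuccEquiv F n p with hqdef
    have hq : q ≠ 0 := by
      rw [hqdef]
      intro h
      exact hp ((finSuccEquiv F n).injective (by simp [h]))
    set k := q.natDegree with hk
    set pk := q.leadingCoeff with hpkdef
    have hpk : pk ≠ 0 := Polynomial.leadingCoeff_ne_zero.mpr hq
    have hpk' : (finSuccEquiv F n p).coeff k ≠ 0 := by
      rw [← hqdef]; exact hpk
    have hdeg : pk.totalDegree + k ≤ p.totalDegree := by
      have := MvPolynomial.totalDegree_coeff_finSuccEquiv_add_le p k hpk'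
      rw [← hqdef] at this
      exact this
    set A : Finset (Fin n → F) :=
      (Fintype.piFinset fun _ : Fin n => S).filter fun s => MvPolynomial.eval s pk = 0 with hA
    -- the zero set in the product form
    set Z' : Finset (F × (Fin n → F)) :=
      (S ×ˢ Fintype.piFinset fun _ : Fin n => S).filter
        fun ys => MvPolynomial.eval (Fin.cons ys.1 ys.2) p = 0 with hZ'
    have hZcard : ((Fintype.piFinset fun _ : Fin (n+1) => S).filter
        fun x => MvPolynomial.eval x p = 0).card = Z'.card := by
      apply Finset.card_bij (fun x _ => (x 0, Fin.tail x))
      · intro x hx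
        simp only [Finset.mem_filter, Fintype.mem_piFinset] at hx
        simp only [hZ', Finset.mem_filter, Finset.mem_product, Fintype.mem_piFinset]
        refine ⟨⟨hx.1 0, fun i => hx.1 i.succ⟩, ?_⟩
        rw [Fin.cons_self_tail]; exact hx.2
      · intro x hx y hy hxy
        have h1 : x 0 = y 0 := congrArg Prod.fst hxy
        have h2 : Fin.tail x = Fin.tail y := congrArg Prod.snd hxy
        funext i
        refine Fin.cases h1 (fun j => ?_) i
        exact congrFun h2 j
      · intro ys hys
        simp only [hZ', Finset.mem_filter, Finset.mem_product, Fintype.mem_piFinset] at hys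
        refine ⟨Fin.cons ys.1 ys.2, ?_, ?_⟩
        · simp only [Finset.mem_filter, Fintype.mem_piFinset]
          refine ⟨fun i => ?_, hys.2⟩
          refine Fin.cases hys.1.1 (fun j => by simpa using hys.1.2 j) i
        · simp
    -- fiberwise count
    have hfib : Z'.card = ∑ s ∈ Fintype.piFinset fun _ : Fin n => S,
        (Z'.filter fun ys => ys.2 = s).card := by
      apply Finset.card_eq_sum_card_fiberwise
      intro ys (hys : ys ∈ Z')
      simp only [hZ', Finset.mem_filter, Finset.mem_product] at hys
      exact hys.1.2
    have hbound : ∀ s ∈ Fintype.piFinset fun _ : Fin n => S,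
        (Z'.filter fun ys => ys.2 = s).card ≤ if MvPolynomial.eval s pk = 0 then S.card else k := by
      intro s _
      split_ifs with hs
      · -- trivial bound by |S|
        apply Finset.card_le_card_of_injOn (fun ys => ys.1)
        · intro ys (hys : ys ∈ Z'.filter fun ys => ys.2 = s)
          simp only [hZ', Finset.mem_filter, Finset.mem_product] at hys
          exact hys.1.1.1
        · intro a ha b hb hab
          simp only [Finset.coe_filter, Set.mem_setOf_eq] at ha hb
          exact Prod.ext hab (ha.2.trans hb.2.symm)
      · -- roots of the nonzero univariate polynomial
        set u : Polynomial F := q.map (MvPolynomial.eval s) with hu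
        have hu0 : u ≠ 0 := by
          intro h
          apply hs
          have h2 : u.coeff k = 0 := by rw [h]; simp
          rw [hu, Polynomial.coeff_map] at h2
          exact h2
        have hroots : (S.filter fun y => Polynomial.eval y u = 0).card ≤ k := by
          calc (S.filter fun y => Polynomial.eval y u = 0).card
              ≤ u.roots.toFinset.card := by
                apply Finset.card_le_card
                intro y hy
                simp only [Finset.mem_filter] at hy
                simp [Multiset.mem_toFinset, Polynomial.mem_roots hu0, hy.2]
            _ ≤ Multiset.card u.roots := Multiset.toFinset_card_le _
            _ ≤ u.natDegree := Polynomial.card_roots' u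
            _ ≤ k := Polynomial.natDegree_map_le
        calc (Z'.filter fun ys => ys.2 = s).card
            ≤ (S.filter fun y => Polynomial.eval y u = 0).card := by
              apply Finset.card_le_card_of_injOn (fun ys => ys.1)
              · intro ys (hys : ys ∈ Z'.filter fun ys => ys.2 = s)
                simp only [hZ', Finset.mem_filter, Finset.mem_product] at hys
                obtain ⟨⟨⟨hy1, _⟩, hy2⟩, rfl⟩ := hys
                show _ ∈ S.filter fun y => Polynomial.eval y u = 0
                simp only [Finset.mem_filter]
                refine ⟨hy1, ?_⟩
                rw [← MvPolynomial.eval_eq_eval_mv_eval']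
                exact hy2
              · intro a ha b hb hab
                simp only [Finset.coe_filter, Set.mem_setOf_eq] at ha hb
                exact Prod.ext hab (ha.2.trans hb.2.symm)
          _ ≤ k := hroots
    have hsplit : Z'.card ≤ A.card * S.card + S.card ^ n * k := by
      rw [hfib]
      calc ∑ s ∈ Fintype.piFinset fun _ : Fin n => S, (Z'.filter fun ys => ys.2 = s).card
          ≤ ∑ s ∈ Fintype.piFinset fun _ : Fin n => S,
              (if MvPolynomial.eval s pk = 0 then S.card else k) :=
            Finset.sum_le_sum hbound
        _ ≤ A.card * S.card + S.card ^ n * k := by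
            rw [Finset.sum_ite, Finset.sum_const, Finset.sum_const, smul_eq_mul, smul_eq_mul,
              ← hA]
            exact Nat.add_le_add le_rfl (Nat.mul_le_mul_right k
              (le_trans (Finset.card_filter_le _ _) (by simp)))
    have hIH : A.card * S.card ≤ pk.totalDegree * S.card ^ n := ih pk hpk
    -- combine
    rw [hZcard]
    calc Z'.card * S.card
        ≤ (A.card * S.card + S.card ^ n * k) * S.card := by
          exact Nat.mul_le_mul_right _ hsplit
      _ = A.card * S.card * S.card + k * S.card ^ (n+1) := by ring
      _ ≤ pk.totalDegree * S.card ^ n * S.card + k * S.card ^ (n+1) := by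
          gcongr
      _ = (pk.totalDegree + k) * S.card ^ (n+1) := by ring
      _ ≤ p.totalDegree * S.card ^ (n+1) := Nat.mul_le_mul_right _ hdeg

theorem stmt16 {F : Type*} [Field F] {n : ℕ}
    (p : MvPolynomial (Fin n) F) (hp : p ≠ 0)
    (S : Finset F) (hS : p.totalDegree ≤ S.card) :
    Nat.card {x : Fin n → F // (∀ i, x i ∈ S) ∧ MvPolynomial.eval x p = 0} ≤
      p.totalDegree * S.card ^ (n - 1) := by
  classical
  set Z : Finset (Fin n → F) :=
    (Fintype.piFinset fun _ : Fin n => S).filter fun x => MvPolynomial.eval x p = 0 with hZ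
  have hcard : Nat.card {x : Fin n → F // (∀ i, x i ∈ S) ∧ MvPolynomial.eval x p = 0}
      = Z.card := by
    rw [← Nat.card_eq_finsetCard]
    apply Nat.card_congr
    apply Equiv.subtypeEquivRight
    intro x
    simp [hZ, Fintype.mem_piFinset, and_comm]
  rw [hcard]
  rcases n with _ | m
  · -- n = 0 : the zero set is empty
    obtain ⟨a, rfl⟩ := MvPolynomial.C_surjective (Fin 0) p
    have ha : a ≠ 0 := fun h => hp (by simp [h])
    have : Z = ∅ := by
      apply Finset.filter_false_of_mem
      intro x _
      simpa using ha
    simp [this]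
  · rcases Finset.eq_empty_or_nonempty S with rfl | hSne
    · have : Z = ∅ := by
        rw [hZ]
        apply Finset.filter_false_of_mem
        intro x hx
        simp only [Fintype.mem_piFinset] at hx
        exact absurd (hx 0) (by simp)
      simp [this]
    · have hSpos : 0 < S.card := Finset.card_pos.mpr hSne
      have key := sz_key S (m+1) p hp
      have : Z.card * S.card ≤ p.totalDegree * S.card ^ m * S.card := by
        calc Z.card * S.card ≤ p.totalDegree * S.card ^ (m+1) := key
          _ = p.totalDegree * S.card ^ m * S.card := by ring
      exact Nat.le_of_mul_le_mul_right this hSpos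
end
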